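/- Every orientation-preserving action of SL(2, ℤ) on ℝ is trivial: if φ: SL(2,ℤ) → Homeo₊(ℝ) is a group homomorphism, then φ(g) is the identity for every g. -/

import Mathlib

open Matrix Matrix.SpecialLinearGroup ModularGroup MatrixGroups

lemma gen_ST (g : SL(2,ℤ)) :
    g ∈ Subgroup.closure {ModularGroup.S, ModularGroup.T} := by
  set H := Subgroup.closure {ModularGroup.S, ModularGroup.T} with hH
  have hS : ModularGroup.S ∈ H := Subgroup.subset_closure (by simp)
  have hT : ModularGroup.T ∈ H := Subgroup.subset_closure (by simp)
  -- strong induction on |g 1 0|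
  suffices h : ∀ N : ℕ, ∀ g : SL(2,ℤ), ((g : Matrix (Fin 2) (Fin 2) ℤ) 1 0).natAbs = N → g ∈ H by
    exact h _ g rfl
  intro N
  induction N using Nat.strong_induction_on with
  | _ N ih =>
  intro g hg
  set a := (g : Matrix (Fin 2) (Fin 2) ℤ) 0 0 with ha
  set b := (g : Matrix (Fin 2) (Fin 2) ℤ) 0 1 with hb
  set c := (g : Matrix (Fin 2) (Fin 2) ℤ) 1 0 with hc
  set d := (g : Matrix (Fin 2) (Fin 2) ℤ) 1 1 with hd
  have hdet : a * d - b * c = 1 := by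
    have := g.2
    rw [Matrix.det_fin_two] at this
    exact this
  have heta : (g : Matrix (Fin 2) (Fin 2) ℤ) = !![a, b; c, d] := Matrix.eta_fin_two _
  by_cases hc0 : c = 0
  · -- upper triangular case
    rw [hc0, mul_zero, sub_zero] at hdet
    rcases Int.mul_eq_one_iff_eq_one_or_neg_one.mp hdet with ⟨ha1, hd1⟩ | ⟨ha1, hd1⟩
    · have : g = ModularGroup.T ^ b := by
        apply Subtype.ext
        show (g : Matrix (Fin 2) (Fin 2) ℤ) = _
        rw [coe_T_zpow, heta, ha1, hd1, hc0]
      rw [this]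
      exact H.zpow_mem hT b
    · have : g = ModularGroup.S * ModularGroup.S * ModularGroup.T ^ (-b) := by
        apply Subtype.ext
        show (g : Matrix (Fin 2) (Fin 2) ℤ) = _
        rw [Matrix.SpecialLinearGroup.coe_mul, Matrix.SpecialLinearGroup.coe_mul, coe_T_zpow,
          heta, ha1, hd1, hc0]
        rw [show ((ModularGroup.S : SL(2,ℤ)) : Matrix (Fin 2) (Fin 2) ℤ) *
            ((ModularGroup.S : SL(2,ℤ)) : Matrix (Fin 2) (Fin 2) ℤ) = -1 from S_mul_S_eq]
        rw [Matrix.neg_mul, Matrix.one_mul]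
        ext i j
        fin_cases i <;> fin_cases j <;> simp
      rw [this]
      exact H.mul_mem (H.mul_mem hS hS) (H.zpow_mem hT (-b))
  · -- euclidean step
    set n : ℤ := -(a / c) with hn
    have hTng : ((ModularGroup.T ^ n * g : SL(2,ℤ)) : Matrix (Fin 2) (Fin 2) ℤ)
        = !![a + n * c, b + n * d; c, d] := by
      rw [Matrix.SpecialLinearGroup.coe_mul, coe_T_zpow, heta, Matrix.mul_fin_two]
      norm_num [mul_comm]
    have hSg : ((ModularGroup.S * (ModularGroup.T ^ n * g) : SL(2,ℤ)) : Matrix (Fin 2) (Fin 2) ℤ)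
        = !![-c, -d; a + n * c, b + n * d] := by
      rw [Matrix.SpecialLinearGroup.coe_mul, coe_S, hTng, Matrix.mul_fin_two]
      norm_num
    have hentry : ((ModularGroup.S * (ModularGroup.T ^ n * g) : SL(2,ℤ)) : Matrix (Fin 2) (Fin 2) ℤ) 1 0 = a % c := by
      rw [hSg]
      show a + n * c = a % c
      rw [hn, Int.emod_def]; ring
    have hlt : (a % c).natAbs < N := by
      rw [← hg]
      have h1 : 0 ≤ a % c := Int.emod_nonneg _ hc0
      have h2 : a % c < |c| := by
        rcases lt_or_gt_of_ne hc0 with h | h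
        · rw [abs_of_neg h, ← Int.emod_neg]
          exact Int.emod_lt_of_pos _ (by omega)
        · rw [abs_of_pos h]; exact Int.emod_lt_of_pos _ h
      rw [Int.abs_eq_natAbs] at h2
      omega
    have hmem : ModularGroup.S * (ModularGroup.T ^ n * g) ∈ H :=
      ih _ hlt _ (by rw [hentry])
    have : g = (ModularGroup.T ^ n)⁻¹ * (ModularGroup.S⁻¹ * (ModularGroup.S * (ModularGroup.T ^ n * g))) := by
      group
    rw [this]
    exact H.mul_mem (H.inv_mem (H.zpow_mem hT n)) (H.mul_mem (H.inv_mem hS) hmem)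
lemma aux_gt (f : ℝ ≃o ℝ) (x : ℝ) (hx : x < f x) : ∀ n : ℕ, x < (f ^ (n+1)) x := by
  intro n
  induction n with
  | zero => simpa using hx
  | succ k ih =>
      have h2 : (f ^ (k+2)) x = f ((f ^ (k+1)) x) := by
        rw [pow_succ']; rfl
      rw [h2]
      exact lt_trans hx (f.lt_iff_lt.mpr ih)

lemma torsion_free (f : ℝ ≃o ℝ) (n : ℕ) (hn : n ≠ 0) (h : f ^ n = 1) : f = 1 := by
  by_contra hf
  have : ∃ x : ℝ, f x ≠ x := by
    by_contra hc
    push_neg at hc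
    exact hf (by ext x; exact hc x)
  obtain ⟨x, hx⟩ := this
  obtain ⟨m, rfl⟩ : ∃ m, n = m + 1 := ⟨n - 1, by omega⟩
  have key : ∀ (g : ℝ ≃o ℝ), x < g x → g ^ (m+1) = 1 → False := by
    intro g hg hgn
    have := aux_gt g x hg m
    rw [hgn] at this
    simp at this
  rcases lt_or_gt_of_ne hx with hlt | hgt
  · have h1 : x < f⁻¹ x := by
      apply f.lt_iff_lt.mp
      have : f (f⁻¹ x) = x := by
        show f (f.symm x) = x
        simp
      rw [this]; exact hlt
    exact key f⁻¹ h1 (by rw [inv_pow, h, inv_one])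
  · exact key f hgt h

lemma S_pow_four : (ModularGroup.S : SL(2,ℤ))^4 = 1 := by
  apply Subtype.ext
  show ((ModularGroup.S^4 : SL(2,ℤ)) : Matrix (Fin 2) (Fin 2) ℤ) = 1
  rw [Matrix.SpecialLinearGroup.coe_pow, coe_S]
  norm_num [pow_succ, Matrix.mul_fin_two]
  exact Matrix.one_fin_two.symm

lemma ST_pow_six : ((ModularGroup.S * ModularGroup.T : SL(2,ℤ))^6 : SL(2,ℤ)) = 1 := by
  apply Subtype.ext
  show (((ModularGroup.S*ModularGroup.T)^6 : SL(2,ℤ)) : Matrix (Fin 2) (Fin 2) ℤ) = 1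
  rw [Matrix.SpecialLinearGroup.coe_pow, Matrix.SpecialLinearGroup.coe_mul, coe_S, coe_T]
  norm_num [pow_succ, Matrix.mul_fin_two]
  exact Matrix.one_fin_two.symm

/-- Every orientation-preserving action of `SL(2, ℤ)` on `ℝ` is trivial. -/
theorem stmt_11 (φ : Matrix.SpecialLinearGroup (Fin 2) ℤ →* (ℝ ≃o ℝ)) :
    ∀ g : Matrix.SpecialLinearGroup (Fin 2) ℤ, φ g = 1 := by
  have hφS : φ ModularGroup.S = 1 :=
    torsion_free _ 4 (by norm_num) (by rw [← map_pow, S_pow_four, _root_.map_one])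
  have hφST : φ (ModularGroup.S * ModularGroup.T) = 1 :=
    torsion_free _ 6 (by norm_num) (by rw [← map_pow, ST_pow_six, _root_.map_one])
  have hφT : φ ModularGroup.T = 1 := by
    have := hφST
    rw [_root_.map_mul, hφS, one_mul] at this
    exact this
  intro g
  have hle : Subgroup.closure {ModularGroup.S, ModularGroup.T} ≤ φ.ker := by
    rw [Subgroup.closure_le]
    rintro x hx
    rcases hx with h | h
    · rw [h]; exact hφS
    · simp only [Set.mem_singleton_iff] at h
      rw [h]; exact hφT
  exact hle (gen_ST g)
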